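/- Let A ∈ GL(n,F) be cyclic and primary with χ_A = μ_A = p^m for p ∈ F[X] irreducible of degree d, and let v be a cyclic vector. Then for each 0 ≤ i ≤ m: ker(p(A)^i) = ⟨v·p(A)^{m-i}⟩_A and dim ker(p(A)^i) = i·d. Moreover, every A-invariant subspace of F^n equals ker(p(A)^i) for some i, so the A-invariant subspaces form a chain of length m. -/

import Mathlib

open Polynomial Matrix

/-- `p` is the minimal polynomial of the vector `v` with respect to the matrix `A`
(row vectors, right multiplication). -/
def IsVecMinpoly {F : Type*} [Field F] {n : ℕ} (A : Matrix (Fin n) (Fin n) F)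
    (v : Fin n → F) (p : F[X]) : Prop :=
  p.Monic ∧ v ᵥ* (aeval A p) = 0 ∧ ∀ q : F[X], v ᵥ* (aeval A q) = 0 → p ∣ q

/-- The `A`-span `⟨v⟩_A = {v·p(A) : p ∈ F[X]}` of a vector `v`. -/
def aspan {F : Type*} [Field F] {n : ℕ} (A : Matrix (Fin n) (Fin n) F)
    (v : Fin n → F) : Submodule F (Fin n → F) :=
  Submodule.span F {w | ∃ p : F[X], w = v ᵥ* (aeval A p)}

/-- The companion matrix of a polynomial `p` (for the right-multiplication convention):
identity superdiagonal block, last row the negated coefficients of `p`. -/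
def companion {F : Type*} [Field F] (n : ℕ) (p : F[X]) : Matrix (Fin n) (Fin n) F :=
  Matrix.of fun i j => if (i : ℕ) = n - 1 then -p.coeff j
    else if (i : ℕ) + 1 = (j : ℕ) then 1 else 0

section Aux

variable {F : Type*} [Field F] {n : ℕ}

/-- The map `q ↦ u · q(A)` as an `F`-linear map. -/
noncomputable def aphi (A : Matrix (Fin n) (Fin n) F) (u : Fin n → F) : F[X] →ₗ[F] (Fin n → F) where
  toFun q := u ᵥ* aeval A q
  map_add' q r := by simp only [_root_.map_add, Matrix.vecMul_add]
  map_smul' c q := by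
    ext j
    simp [Matrix.vecMul, dotProduct, Finset.mul_sum, mul_left_comm]

@[simp] lemma aphi_apply (A : Matrix (Fin n) (Fin n) F) (u : Fin n → F) (q : F[X]) :
    aphi A u q = u ᵥ* aeval A q := rfl

lemma aspan_eq_range (A : Matrix (Fin n) (Fin n) F) (u : Fin n → F) :
    aspan A u = LinearMap.range (aphi A u) := by
  rw [aspan, ← Submodule.span_eq (LinearMap.range (aphi A u))]
  congr 1
  ext w
  simp only [Set.mem_setOf_eq, SetLike.mem_coe, LinearMap.mem_range, aphi_apply]
  exact ⟨fun ⟨q, h⟩ => ⟨q, h.symm⟩, fun ⟨q, h⟩ => ⟨q, h.symm⟩⟩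

lemma mem_aspan_iff {A : Matrix (Fin n) (Fin n) F} {u w : Fin n → F} :
    w ∈ aspan A u ↔ ∃ q : F[X], w = u ᵥ* aeval A q := by
  rw [aspan_eq_range]
  simp only [LinearMap.mem_range, aphi_apply]
  exact ⟨fun ⟨q, h⟩ => ⟨q, h.symm⟩, fun ⟨q, h⟩ => ⟨q, h.symm⟩⟩

/-- Dimension of the A-span of a vector whose vector-minimal-polynomial is `μ`. -/
lemma finrank_aspan (A : Matrix (Fin n) (Fin n) F) (u : Fin n → F) (μ : F[X])
    (hμ : μ.Monic) (h0 : u ᵥ* aeval A μ = 0) (hdvd : ∀ q : F[X], u ᵥ* aeval A q = 0 → μ ∣ q) :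
    Module.finrank F (aspan A u) = μ.natDegree := by
  have hker : LinearMap.ker (aphi A u) = (Ideal.span {μ}).restrictScalars F := by
    ext q
    simp only [LinearMap.mem_ker, aphi_apply, Submodule.restrictScalars_mem,
      Ideal.mem_span_singleton]
    constructor
    · exact hdvd q
    · rintro ⟨r, rfl⟩
      rw [_root_.map_mul, ← Matrix.vecMul_vecMul, h0, Matrix.zero_vecMul]
  rw [aspan_eq_range, ← (LinearMap.quotKerEquivRange (aphi A u)).finrank_eq, hker]
  have e : (F[X] ⧸ (Ideal.span {μ}).restrictScalars F) ≃ₗ[F] AdjoinRoot μ :=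
    Submodule.Quotient.restrictScalarsEquiv F (Ideal.span {μ})
  rw [e.finrank_eq]
  have := (AdjoinRoot.powerBasis' hμ).finrank
  simpa using this

end Aux

/-- For a cyclic primary matrix with `χ_A = μ_A = p^m` and cyclic vector `v`:
`ker p(A)^i = ⟨v·p(A)^{m-i}⟩_A`, this space has dimension `i·d`, and every `A`-invariant
subspace is one of these kernels. -/
theorem stmt13 {F : Type*} [Field F] {n : ℕ} (A : Matrix (Fin n) (Fin n) F) (hA : IsUnit A)
    (p : F[X]) (hp : p.Monic) (hirr : Irreducible p) (m : ℕ)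
    (hchar : Matrix.charpoly A = p ^ m) (hmin : minpoly F A = p ^ m)
    (v : Fin n → F) (hv : aspan A v = ⊤) :
    (∀ i ≤ m,
      LinearMap.ker (Matrix.vecMulLinear (aeval A (p ^ i))) =
        aspan A (v ᵥ* (aeval A (p ^ (m - i)))) ∧
      Module.finrank F (LinearMap.ker (Matrix.vecMulLinear (aeval A (p ^ i)))) =
        i * p.natDegree) ∧
    (∀ W : Submodule F (Fin n → F), (∀ w ∈ W, w ᵥ* A ∈ W) →
      ∃ i ≤ m, W = LinearMap.ker (Matrix.vecMulLinear (aeval A (p ^ i)))) := by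
  have hpne : p ≠ 0 := hp.ne_zero
  have hprime : Prime p := hirr.prime
  -- every vector is v·q(A)
  have hcyc : ∀ w : Fin n → F, ∃ q : F[X], w = v ᵥ* aeval A q := by
    intro w
    exact mem_aspan_iff.mp (by rw [hv]; trivial)
  -- v · p(A)^m = 0
  have ha : v ᵥ* aeval A (p ^ m) = 0 := by
    rw [← hmin, minpoly.aeval, Matrix.vecMul_zero]
  -- if v·q(A) = 0 then p^m ∣ q
  have hb : ∀ q : F[X], v ᵥ* aeval A q = 0 → p ^ m ∣ q := by
    intro q hq
    rw [← hmin]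
    apply minpoly.dvd
    have h1 : ∀ w : Fin n → F, w ᵥ* aeval A q = 0 := by
      intro w
      obtain ⟨r, rfl⟩ := hcyc w
      calc v ᵥ* aeval A r ᵥ* aeval A q = v ᵥ* aeval A (r * q) := by
            rw [Matrix.vecMul_vecMul, ← _root_.map_mul]
        _ = v ᵥ* aeval A q ᵥ* aeval A r := by
            rw [mul_comm, _root_.map_mul, ← Matrix.vecMul_vecMul]
        _ = 0 := by rw [hq, Matrix.zero_vecMul]
    ext i j
    have := congrFun (h1 (Pi.single i 1)) j
    simpa [Matrix.vecMul, dotProduct, Pi.single_apply] using this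
  -- conversely if p^m ∣ q then v·q(A) = 0
  have hz : ∀ q : F[X], p ^ m ∣ q → v ᵥ* aeval A q = 0 := by
    rintro q ⟨r, rfl⟩
    rw [_root_.map_mul, ← Matrix.vecMul_vecMul, ha, Matrix.zero_vecMul]
  have hcancel : ∀ i ≤ m, ∀ q : F[X], (p ^ m ∣ q * p ^ i ↔ p ^ (m - i) ∣ q) := by
    intro i hi q
    have h : (p : F[X]) ^ m = p ^ (m - i) * p ^ i := by
      rw [← pow_add, Nat.sub_add_cancel hi]
    rw [h, mul_dvd_mul_iff_right (pow_ne_zero i hpne)]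
  -- the kernel description
  have hker : ∀ i ≤ m, LinearMap.ker (Matrix.vecMulLinear (aeval A (p ^ i))) =
      aspan A (v ᵥ* (aeval A (p ^ (m - i)))) := by
    intro i hi
    ext w
    obtain ⟨q, rfl⟩ := hcyc w
    rw [LinearMap.mem_ker, Matrix.vecMulLinear_apply, mem_aspan_iff]
    constructor
    · intro h
      rw [Matrix.vecMul_vecMul, ← _root_.map_mul] at h
      have hdq : p ^ (m - i) ∣ q := (hcancel i hi q).mp (hb _ h)
      obtain ⟨r, rfl⟩ := hdq
      exact ⟨r, by rw [_root_.map_mul, ← Matrix.vecMul_vecMul]⟩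
    · rintro ⟨r, hr⟩
      rw [Matrix.vecMul_vecMul, ← _root_.map_mul] at hr ⊢
      apply hz
      have h1 : v ᵥ* aeval A (q - p ^ (m - i) * r) = 0 := by
        rw [_root_.map_sub, Matrix.vecMul_sub, hr, sub_self]
      have h3 : (p : F[X]) ^ m ∣ (q - p ^ (m - i) * r) * p ^ i := (hb _ h1).mul_right _
      have h4 : (p : F[X]) ^ m ∣ p ^ (m - i) * r * p ^ i :=
        ⟨r, by rw [mul_right_comm, ← pow_add, Nat.sub_add_cancel hi]⟩
      have h5 : q * p ^ i = (q - p ^ (m - i) * r) * p ^ i + p ^ (m - i) * r * p ^ i := by ring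
      rw [h5]
      exact dvd_add h3 h4
  have hdim : ∀ i ≤ m, Module.finrank F
      (LinearMap.ker (Matrix.vecMulLinear (aeval A (p ^ i)))) = i * p.natDegree := by
    intro i hi
    rw [hker i hi]
    have h0 : (v ᵥ* aeval A (p ^ (m - i))) ᵥ* aeval A (p ^ i) = 0 := by
      rw [Matrix.vecMul_vecMul, ← _root_.map_mul, ← pow_add, Nat.sub_add_cancel hi]
      exact ha
    have hdvd : ∀ q : F[X], (v ᵥ* aeval A (p ^ (m - i))) ᵥ* aeval A q = 0 → p ^ i ∣ q := by
      intro q h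
      rw [Matrix.vecMul_vecMul, ← _root_.map_mul] at h
      have h2 := hb _ h
      rw [mul_comm] at h2
      have h3 := (hcancel (m - i) (Nat.sub_le m i) q).mp h2
      rwa [Nat.sub_sub_self hi] at h3
    rw [finrank_aspan A _ (p ^ i) (hp.pow i) h0 hdvd, Polynomial.natDegree_pow]
  refine ⟨fun i hi => ⟨hker i hi, hdim i hi⟩, ?_⟩
  intro W hW
  have hWpoly : ∀ a : F[X], ∀ w ∈ W, w ᵥ* aeval A a ∈ W := by
    intro a
    induction a using Polynomial.induction_on' with
    | add f g hf hg =>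
      intro w hw
      rw [_root_.map_add, Matrix.vecMul_add]
      exact W.add_mem (hf w hw) (hg w hw)
    | monomial k c =>
      intro w hw
      have hk : ∀ k : ℕ, w ᵥ* A ^ k ∈ W := by
        intro k
        induction k with
        | zero => simpa using hw
        | succ k ih => rw [pow_succ, ← Matrix.vecMul_vecMul]; exact hW _ ih
      rw [aeval_monomial, ← Algebra.smul_def]
      have hsm : w ᵥ* (c • A ^ k) = c • (w ᵥ* A ^ k) := by
        ext j
        simp [Matrix.vecMul, dotProduct, Finset.mul_sum, mul_left_comm]
      rw [hsm]
      exact W.smul_mem c (hk k)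
  let J : Ideal F[X] :=
    { carrier := {q | v ᵥ* aeval A q ∈ W}
      zero_mem' := by
        simp only [Set.mem_setOf_eq, _root_.map_zero, Matrix.vecMul_zero]
        exact W.zero_mem
      add_mem' := by
        intro q r hq hr
        simp only [Set.mem_setOf_eq, _root_.map_add, Matrix.vecMul_add] at *
        exact W.add_mem hq hr
      smul_mem' := by
        intro a q hq
        simp only [Set.mem_setOf_eq, smul_eq_mul] at *
        rw [mul_comm, _root_.map_mul, ← Matrix.vecMul_vecMul]
        exact hWpoly a _ hq }
  obtain ⟨g, hg⟩ := (IsPrincipalIdealRing.principal J).principal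
  have hpmJ : (p ^ m : F[X]) ∈ J := by
    show v ᵥ* aeval A (p ^ m) ∈ W
    rw [ha]; exact W.zero_mem
  have hgdvd : g ∣ p ^ m := by
    rw [← Ideal.mem_span_singleton, show Ideal.span {g} = J from hg.symm]
    exact hpmJ
  obtain ⟨i, hi, hassoc⟩ := (dvd_prime_pow hprime m).mp hgdvd
  have hJ : J = Ideal.span {p ^ i} := by
    rw [show J = Ideal.span {g} from hg, Ideal.span_singleton_eq_span_singleton.mpr hassoc]
  refine ⟨m - i, Nat.sub_le m i, ?_⟩
  rw [hker (m - i) (Nat.sub_le m i), Nat.sub_sub_self hi]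
  ext w
  obtain ⟨q, rfl⟩ := hcyc w
  rw [mem_aspan_iff]
  constructor
  · intro hw
    have hqJ : q ∈ J := hw
    rw [hJ, Ideal.mem_span_singleton] at hqJ
    obtain ⟨r, rfl⟩ := hqJ
    exact ⟨r, by rw [_root_.map_mul, ← Matrix.vecMul_vecMul]⟩
  · rintro ⟨r, hr⟩
    have hmem : (p : F[X]) ^ i * r ∈ J := by
      rw [hJ, Ideal.mem_span_singleton]
      exact Dvd.intro r rfl
    show v ᵥ* aeval A q ∈ W
    rw [hr, Matrix.vecMul_vecMul, ← _root_.map_mul]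
    exact hmem
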